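/- Let λ be a Ferrers diagram (set of unit squares of a partition placed in the northwest corner of the nonnegative quadrant, in English notation), and let N(m,n) denote the number of northeastern lattice paths from (m,0) to (0,n) that do not pass through the interior of λ. Then for all m, n ≥ 1: N(m-1,n+1) * N(m+1,n-1) ≤ N(m,n)^2. -/

import Mathlib

/-- A northeastern lattice path from `(m,0)` to `(0,n)`: points `(i,j)` with `i` the row
(increasing southward) and `j` the column (increasing eastward); each step goes one unit
north (`i` decreases) or east (`j` increases). The point sequence is frozen at `(0,n)`
after `m+n` steps. -/
structure NEPath (m n : ℕ) where
  pts : ℕ → ℕ × ℕ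
  start : pts 0 = (m, 0)
  step : ∀ k < m + n,
    ((pts (k+1)).1 + 1 = (pts k).1 ∧ (pts (k+1)).2 = (pts k).2) ∨
    ((pts (k+1)).1 = (pts k).1 ∧ (pts (k+1)).2 = (pts k).2 + 1)
  tail : ∀ k, m + n ≤ k → pts k = (0, n)

/-- A path avoids (the interior of) the Ferrers diagram with row lengths `lam`
(rows indexed from the north starting at 0) iff each of its points `(i,j)` lies weakly
southeast of the staircase boundary, i.e. `lam i ≤ j`; touching the boundary is allowed. -/
def Avoids (lam : ℕ → ℕ) {m n : ℕ} (p : NEPath m n) : Prop :=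
  ∀ k, lam (p.pts k).1 ≤ (p.pts k).2

/-- `pathCount lam m n` is the number of northeastern lattice paths from `(m,0)` to `(0,n)`
that do not go inside the Ferrers diagram `lam`. -/
noncomputable def pathCount (lam : ℕ → ℕ) (m n : ℕ) : ℕ :=
  Nat.card {p : NEPath m n // Avoids lam p}

/-- `lam` is the row-length function of the Ferrers diagram of a partition:
weakly decreasing with finitely many nonzero rows. -/
def IsFerrers (lam : ℕ → ℕ) : Prop :=
  Antitone lam ∧ ∃ K, ∀ i, K ≤ i → lam i = 0

open Finset
open scoped FinsetFamily

noncomputable def Xset (lam : ℕ → ℕ) (m : ℕ) (n : ℤ) : Finset (Fin m → ℤ) :=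
  (Fintype.piFinset fun i : Fin m => Finset.Icc ((lam i : ℤ)) n).filter
    fun x => ∀ i j : Fin m, i ≤ j → x j ≤ x i

lemma mem_Xset {lam : ℕ → ℕ} {m : ℕ} {n : ℤ} {x : Fin m → ℤ} :
    x ∈ Xset lam m n ↔
      (∀ i : Fin m, (lam i : ℤ) ≤ x i ∧ x i ≤ n) ∧ ∀ i j : Fin m, i ≤ j → x j ≤ x i := by
  simp [Xset, Fintype.mem_piFinset, Finset.mem_Icc]

lemma Xstep1 (lam : ℕ → ℕ) (hanti : Antitone lam) (M : ℕ) (hM : lam M = 0) (n : ℤ) :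
    (Xset lam M (n+1)).card * (Xset lam (M+2) (n-1)).card ≤
      (Xset lam (M+1) (n+1)).card * (Xset lam (M+1) (n-1)).card := by
  classical
  set φ : (Fin M → ℤ) → (Fin (M+2) → ℤ) := fun y i =>
    if h0 : (i : ℕ) = 0 then n+1 else
      if h : (i : ℕ) ≤ M then y ⟨(i : ℕ) - 1, by omega⟩ else 0 with hphi
  have hφ0 : ∀ y (i : Fin (M+2)), (i:ℕ) = 0 → φ y i = n + 1 := by
    intro y i hi; simp only [hphi]; rw [dif_pos hi]
  have hφmid : ∀ y (i : Fin (M+2)) (h1 : 1 ≤ (i:ℕ)) (h2 : (i:ℕ) ≤ M),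
      φ y i = y ⟨(i:ℕ) - 1, by omega⟩ := by
    intro y i h1 h2; simp only [hphi]; rw [dif_neg (by omega), dif_pos h2]
  have hφlast : ∀ y (i : Fin (M+2)), (i:ℕ) = M + 1 → φ y i = 0 := by
    intro y i hi; simp only [hphi]; rw [dif_neg (by omega), dif_neg (by omega)]
  set A : Finset (Fin (M+2) → ℤ) := (Xset lam M (n+1)).image φ with hA
  set B : Finset (Fin (M+2) → ℤ) := Xset lam (M+2) (n-1) with hB
  have hφinj : Function.Injective φ := by
    intro y y' h
    funext j
    have := congrFun h ⟨(j:ℕ)+1, by omega⟩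
    rw [hφmid y _ (by simp) (by simp <;> omega), hφmid y' _ (by simp) (by simp <;> omega)] at this
    have hjj : (⟨(⟨(j:ℕ)+1, by omega⟩ : Fin (M+2)) - 1, by simp <;> omega⟩ : Fin M) = j := by
      apply Fin.ext; simp
    rwa [hjj] at this
  have hcardA : A.card = (Xset lam M (n+1)).card := Finset.card_image_of_injective _ hφinj
  have key : ∀ w ∈ A ⊻ B, ∃ y ∈ Xset lam M (n+1), ∃ z ∈ Xset lam (M+2) (n-1), w = φ y ⊔ z := by
    intro w hw
    rw [Finset.mem_sups] at hw
    obtain ⟨a, ha, b, hb, rfl⟩ := hw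
    rw [hA, Finset.mem_image] at ha
    obtain ⟨y, hy, rfl⟩ := ha
    exact ⟨y, hy, b, hb, rfl⟩
  have key2 : ∀ w ∈ A ⊼ B, ∃ y ∈ Xset lam M (n+1), ∃ z ∈ Xset lam (M+2) (n-1), w = φ y ⊓ z := by
    intro w hw
    rw [Finset.mem_infs] at hw
    obtain ⟨a, ha, b, hb, rfl⟩ := hw
    rw [hA, Finset.mem_image] at ha
    obtain ⟨y, hy, rfl⟩ := ha
    exact ⟨y, hy, b, hb, rfl⟩
  -- `φ y` is antitone and bounded, given `y ∈ Xset lam M (n+1)` and a witness `z`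
  have hφfacts : ∀ y, y ∈ Xset lam M (n+1) → (0:ℤ) ≤ n + 1 →
      (∀ i : Fin (M+2), 0 ≤ φ y i ∧ φ y i ≤ n + 1) ∧
      (∀ i j : Fin (M+2), i ≤ j → φ y j ≤ φ y i) := by
    intro y hy hn
    rw [mem_Xset] at hy
    have hval : ∀ i : Fin (M+2), 0 ≤ φ y i ∧ φ y i ≤ n + 1 := by
      intro i
      rcases Nat.eq_zero_or_pos (i:ℕ) with h0 | h0
      · rw [hφ0 y i h0]; exact ⟨hn, le_refl _⟩
      · rcases Nat.lt_or_ge ((i:ℕ)) (M+1) with hle | hge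
        · rw [hφmid y i h0 (by omega)]
          have := hy.1 ⟨(i:ℕ)-1, by omega⟩
          exact ⟨le_trans (Int.natCast_nonneg _) this.1, this.2⟩
        · rw [hφlast y i (by omega)]; exact ⟨le_refl _, hn⟩
    refine ⟨hval, fun i j hij => ?_⟩
    have hijv : (i:ℕ) ≤ (j:ℕ) := hij
    rcases Nat.eq_zero_or_pos (i:ℕ) with h0 | h0
    · rw [hφ0 y i h0]; exact (hval j).2
    · rcases Nat.lt_or_ge ((j:ℕ)) (M+1) with hjle | hjge
      · rw [hφmid y i h0 (by omega), hφmid y j (by omega) (by omega)]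
        exact hy.2 _ _ (by simp [Fin.mk_le_mk]; omega)
      · rw [hφlast y j (by omega)]; exact (hval i).1
  have hzn : ∀ z, z ∈ Xset lam (M+2) (n-1) → (0:ℤ) ≤ n - 1 := by
    intro z hz
    rw [mem_Xset] at hz
    exact le_trans (le_trans (Int.natCast_nonneg _) (hz.1 0).1) (hz.1 0).2
  have hsupcard : (A ⊻ B).card ≤ (Xset lam (M+1) (n+1)).card := by
    apply Finset.card_le_card_of_injOn (fun w => fun i : Fin (M+1) => w (Fin.succ i))
    · intro w hw
      obtain ⟨y, hy, z, hz, rfl⟩ := key w hw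
      have hn1 : (0:ℤ) ≤ n - 1 := hzn z hz
      obtain ⟨hφb, hφa⟩ := hφfacts y hy (by omega)
      rw [mem_Xset] at hy hz; simp only [Finset.mem_coe]; rw [mem_Xset]
      refine ⟨fun i => ?_, fun i j hij => ?_⟩
      · have hzb := hz.1 (Fin.succ i)
        simp only [Pi.sup_apply]
        constructor
        · rcases Nat.lt_or_ge (i : ℕ) M with hiM | hiM
          · rw [hφmid y (Fin.succ i) (by simp) (by simp <;> omega)]
            have hyb := hy.1 ⟨(i:ℕ), hiM⟩
            refine le_trans ?_ (le_max_left _ _)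
            have heq : ((⟨((Fin.succ i : Fin (M+2)):ℕ) - 1, by simp <;> omega⟩ : Fin M)) = ⟨(i:ℕ), hiM⟩ := by
              apply Fin.ext; simp
            rw [heq]
            simpa using hyb.1
          · have hiM' : (i:ℕ) = M := by omega
            have hl : lam ((i:ℕ)) = 0 := by rw [hiM']; exact hM
            refine le_trans ?_ (le_max_right _ _)
            calc ((lam (i:ℕ) : ℤ)) = 0 := by rw [hl]; norm_num
              _ ≤ z (Fin.succ i) := le_trans (Int.natCast_nonneg _) hzb.1
        · exact max_le (hφb _).2 (by omega)
      · exact max_le_max (hφa _ _ (by simpa [Fin.succ_le_succ_iff] using hij))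
          (hz.2 _ _ (by simpa [Fin.succ_le_succ_iff] using hij))
    · intro w hw w' hw' h
      obtain ⟨y, hy, z, hz, rfl⟩ := key w hw
      obtain ⟨y', hy', z', hz', rfl⟩ := key w' hw'
      rw [mem_Xset] at hz hz'
      funext i
      induction i using Fin.cases with
      | zero =>
        have e1 : (φ y ⊔ z) 0 = n + 1 := by
          have h1 := (hz.1 0).2
          simp only [Pi.sup_apply]
          rw [hφ0 y 0 rfl]
          exact max_eq_left (by omega)
        have e2 : (φ y' ⊔ z') 0 = n + 1 := by
          have h1 := (hz'.1 0).2
          simp only [Pi.sup_apply]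
          rw [hφ0 y' 0 rfl]
          exact max_eq_left (by omega)
        rw [e1, e2]
      | succ j => exact congrFun h j
  have hinfcard : (A ⊼ B).card ≤ (Xset lam (M+1) (n-1)).card := by
    apply Finset.card_le_card_of_injOn (fun w => fun i : Fin (M+1) => w (Fin.castSucc i))
    · intro w hw
      obtain ⟨y, hy, z, hz, rfl⟩ := key2 w hw
      have hn1 : (0:ℤ) ≤ n - 1 := hzn z hz
      obtain ⟨hφb, hφa⟩ := hφfacts y hy (by omega)
      rw [mem_Xset] at hy hz; simp only [Finset.mem_coe]; rw [mem_Xset]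
      refine ⟨fun i => ?_, fun i j hij => ?_⟩
      · have hzb := hz.1 (Fin.castSucc i)
        simp only [Pi.sup_apply, Pi.inf_apply]
        constructor
        · rcases Nat.eq_zero_or_pos (i : ℕ) with h0 | h0
          · refine le_min ?_ (by simpa using hzb.1)
            rw [hφ0 y _ (by simp [h0])]
            have h1 := hzb.2
            have h2 := le_trans (Int.natCast_nonneg (lam ((Fin.castSucc i : Fin (M+2)):ℕ))) hzb.1
            have h3 : ((lam ((Fin.castSucc i : Fin (M+2)):ℕ) : ℤ)) = ((lam (i:ℕ) : ℤ)) := by simp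
            omega
          · have hilt := i.isLt
            rw [hφmid y (Fin.castSucc i) (by rw [Fin.coe_castSucc]; omega) (by simp <;> omega)]
            refine le_min (le_trans ?_ (hy.1 ⟨((Fin.castSucc i : Fin (M+2)):ℕ)-1, by simp <;> omega⟩).1)
              (by simpa using hzb.1)
            have h2 : lam ((i:ℕ)) ≤ lam (((Fin.castSucc i : Fin (M+2)):ℕ)-1) := hanti (by simp <;> omega)
            exact_mod_cast h2
        · refine le_trans (min_le_right _ _) ?_
          have := hzb.2
          simp only [Fin.coe_castSucc] at *
          omega
      · exact min_le_min (hφa _ _ (by simpa [Fin.castSucc_le_castSucc_iff] using hij))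
          (hz.2 _ _ (by simpa [Fin.castSucc_le_castSucc_iff] using hij))
    · intro w hw w' hw' h
      obtain ⟨y, hy, z, hz, rfl⟩ := key2 w hw
      obtain ⟨y', hy', z', hz', rfl⟩ := key2 w' hw'
      funext i
      induction i using Fin.lastCases with
      | last =>
        have e0 : ∀ (yy : Fin M → ℤ) (zz : Fin (M+2) → ℤ), zz ∈ Xset lam (M+2) (n-1) →
            (φ yy ⊓ zz) (Fin.last (M+1)) = 0 := by
          intro yy zz hzz
          rw [mem_Xset] at hzz
          simp only [Pi.inf_apply]
          rw [hφlast yy _ (by simp)]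
          have := le_trans (Int.natCast_nonneg _) (hzz.1 (Fin.last (M+1))).1
          exact min_eq_left this
        rw [e0 y z hz, e0 y' z' hz']
      | cast j => exact congrFun h j
  calc (Xset lam M (n+1)).card * (Xset lam (M+2) (n-1)).card
      = A.card * B.card := by rw [hcardA]
    _ ≤ (A ⊼ B).card * (A ⊻ B).card := Finset.le_card_infs_mul_card_sups A B
    _ ≤ (Xset lam (M+1) (n-1)).card * (Xset lam (M+1) (n+1)).card := Nat.mul_le_mul hinfcard hsupcard
    _ = (Xset lam (M+1) (n+1)).card * (Xset lam (M+1) (n-1)).card := Nat.mul_comm _ _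

/-- Step 2 : log-concavity in `n` via Daykin's inequality. -/
lemma Xstep2 (lam : ℕ → ℕ) (m : ℕ) (n : ℤ) :
    (Xset lam m (n+1)).card * (Xset lam m (n-1)).card ≤ (Xset lam m n).card ^ 2 := by
  classical
  set A : Finset (Fin m → ℤ) := (Xset lam m (n+1)).image (fun x => x - 1) with hA
  set B : Finset (Fin m → ℤ) := Xset lam m (n-1) with hB
  have hcardA : A.card = (Xset lam m (n+1)).card :=
    Finset.card_image_of_injective _ (fun a b h => by
      funext i; have := congrFun h i; simpa using this)
  have hsups : A ⊻ B ⊆ Xset lam m n := by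
    intro w hw
    rw [Finset.mem_sups] at hw
    obtain ⟨a, ha, b, hb, rfl⟩ := hw
    rw [hA, Finset.mem_image] at ha
    obtain ⟨y, hy, rfl⟩ := ha
    rw [mem_Xset] at hy ⊢
    rw [hB, mem_Xset] at hb
    refine ⟨fun i => ?_, fun i j hij => ?_⟩
    · constructor
      · exact le_trans (hb.1 i).1 (le_max_right _ _)
      · exact max_le (by have := (hy.1 i).2; simp; omega) (by have := (hb.1 i).2; omega)
    · exact max_le_max (by have := hy.2 i j hij; simp; omega) (hb.2 i j hij)
  have hinfs : (A ⊼ B).image (fun v => v + 1) ⊆ Xset lam m n := by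
    intro w hw
    rw [Finset.mem_image] at hw
    obtain ⟨v, hv, rfl⟩ := hw
    rw [Finset.mem_infs] at hv
    obtain ⟨a, ha, b, hb, rfl⟩ := hv
    rw [hA, Finset.mem_image] at ha
    obtain ⟨y, hy, rfl⟩ := ha
    rw [mem_Xset] at hy ⊢
    rw [hB, mem_Xset] at hb
    refine ⟨fun i => ?_, fun i j hij => ?_⟩
    · have h1 := (hb.1 i).1
      have h2 := (hb.1 i).2
      have h3 := (hy.1 i).1
      have h4 := (hy.1 i).2
      simp only [Pi.add_apply, Pi.inf_apply, Pi.sub_apply, Pi.one_apply] at *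
      constructor <;> omega
    · have h1 := hy.2 i j hij
      have h2 := hb.2 i j hij
      simp only [Pi.add_apply, Pi.inf_apply, Pi.sub_apply, Pi.one_apply] at *
      omega
  have daykin := Finset.le_card_infs_mul_card_sups A B
  have h1 : (A ⊻ B).card ≤ (Xset lam m n).card := Finset.card_le_card hsups
  have h2 : (A ⊼ B).card ≤ (Xset lam m n).card := by
    have : (A ⊼ B).card = ((A ⊼ B).image (fun v => v + 1)).card :=
      (Finset.card_image_of_injective _ (fun a b h => by
        funext i; have := congrFun h i; simpa using this)).symm
    rw [this]; exact Finset.card_le_card hinfs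
  calc (Xset lam m (n+1)).card * (Xset lam m (n-1)).card = A.card * B.card := by rw [hcardA]
    _ ≤ (A ⊼ B).card * (A ⊻ B).card := daykin
    _ ≤ (Xset lam m n).card * (Xset lam m n).card := Nat.mul_le_mul h2 h1
    _ = (Xset lam m n).card ^ 2 := (sq _).symm

namespace NEPath

variable {m n : ℕ} (p : NEPath m n)

lemma col_succ (k : ℕ) : (p.pts k).2 ≤ (p.pts (k+1)).2 := by
  rcases Nat.lt_or_ge k (m+n) with hk | hk
  · rcases p.step k hk with ⟨_, h2⟩ | ⟨_, h2⟩ <;> omega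
  · rw [p.tail k hk, p.tail (k+1) (by omega)]

lemma col_mono : Monotone fun k => (p.pts k).2 :=
  monotone_nat_of_le_succ p.col_succ

lemma row_succ (k : ℕ) : (p.pts (k+1)).1 ≤ (p.pts k).1 := by
  rcases Nat.lt_or_ge k (m+n) with hk | hk
  · rcases p.step k hk with ⟨h1, _⟩ | ⟨h1, _⟩ <;> omega
  · rw [p.tail k hk, p.tail (k+1) (by omega)]

lemma row_anti : Antitone fun k => (p.pts k).1 :=
  antitone_nat_of_succ_le p.row_succ

lemma invariant : ∀ k, k ≤ m + n → (p.pts k).2 + m = k + (p.pts k).1 ∧ (p.pts k).1 ≤ m := by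
  intro k
  induction k with
  | zero => intro _; rw [p.start]; omega
  | succ k ih =>
    intro hk
    have hk' : k < m + n := hk
    obtain ⟨h1, h2⟩ := ih (le_of_lt hk')
    rcases p.step k hk' with ⟨ha, hb⟩ | ⟨ha, hb⟩ <;> constructor <;> omega

lemma exists_row_le (i : ℕ) : ∃ k, (p.pts k).1 ≤ i :=
  ⟨m+n, by rw [p.tail _ le_rfl]; exact Nat.zero_le i⟩

/-- first time the row is at most `i` (equivalently, exactly `i` for `i ≤ m`). -/
noncomputable def T (i : ℕ) : ℕ := Nat.find (p.exists_row_le i)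

lemma row_T_le (i : ℕ) : (p.pts (p.T i)).1 ≤ i := Nat.find_spec (p.exists_row_le i)

lemma T_min {i k : ℕ} (h : (p.pts k).1 ≤ i) : p.T i ≤ k := Nat.find_min' _ h

lemma T_le (i : ℕ) : p.T i ≤ m + n :=
  p.T_min (by rw [p.tail _ le_rfl]; exact Nat.zero_le i)

lemma row_le_iff {k i : ℕ} : (p.pts k).1 ≤ i ↔ p.T i ≤ k := by
  constructor
  · exact p.T_min
  · intro h
    exact le_trans (p.row_anti h) (p.row_T_le i)

lemma row_T {i : ℕ} (hi : i ≤ m) : (p.pts (p.T i)).1 = i := by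
  rcases Nat.eq_zero_or_pos (p.T i) with h0 | h0
  · have h1 := p.row_T_le i
    rw [h0, p.start] at h1 ⊢
    simpa using le_antisymm h1 hi
  · obtain ⟨k, hks⟩ : ∃ k, p.T i = k + 1 := ⟨p.T i - 1, by omega⟩
    have hk : ¬ (p.pts k).1 ≤ i := Nat.find_min (p.exists_row_le i) (show k < p.T i by omega)
    have hkmn : k < m + n := by have := p.T_le i; omega
    have h1 := p.row_T_le i
    rw [hks] at h1 ⊢
    rcases p.step k hkmn with ⟨ha, _⟩ | ⟨ha, _⟩ <;> omega

lemma T_zero_right : p.T m = 0 :=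
  Nat.le_zero.mp (p.T_min (by rw [p.start]))

/-- the tuple encoding: entering column of each row. -/
noncomputable def encode : Fin m → ℤ := fun i => ((p.pts (p.T i)).2 : ℤ)

lemma T_eq {i : ℕ} (hi : i ≤ m) : p.T i + i = (p.pts (p.T i)).2 + m := by
  have := (p.invariant (p.T i) (p.T_le i)).1
  rw [p.row_T hi] at this
  omega

end NEPath

section Injectivity

variable {m n : ℕ}

lemma encode_injective : ∀ (p q : NEPath m n), p.encode = q.encode → p = q := by
  intro p q h
  have hT : ∀ i, i ≤ m → p.T i = q.T i := by
    intro i hi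
    rcases Nat.eq_or_lt_of_le hi with rfl | hlt
    · rw [p.T_zero_right, q.T_zero_right]
    · have h1 := p.T_eq hi
      have h2 := q.T_eq hi
      have h3 : (p.pts (p.T i)).2 = (q.pts (q.T i)).2 := by
        have := congrFun h ⟨i, hlt⟩
        simpa [NEPath.encode] using this
      omega
  have hpts : p.pts = q.pts := by
    funext k
    rcases Nat.lt_or_ge k (m+n) with hk | hk
    · have hkle : k ≤ m + n := le_of_lt hk
      have hrowp := (p.invariant k hkle).2
      have hrowq := (q.invariant k hkle).2
      have hrow : (p.pts k).1 = (q.pts k).1 := by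
        have h1 : (p.pts k).1 ≤ (q.pts k).1 := by
          rw [p.row_le_iff, hT _ hrowq]
          exact q.row_le_iff.mp le_rfl
        have h2 : (q.pts k).1 ≤ (p.pts k).1 := by
          rw [q.row_le_iff, ← hT _ hrowp]
          exact p.row_le_iff.mp le_rfl
        omega
      have hcp := (p.invariant k hkle).1
      have hcq := (q.invariant k hkle).1
      have : (p.pts k).2 = (q.pts k).2 := by omega
      exact Prod.ext hrow this
    · rw [p.tail k hk, q.tail k hk]
  obtain ⟨pp, ps, pst, pt⟩ := p
  obtain ⟨qp, qs, qst, qt⟩ := q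
  cases hpts
  rfl

end Injectivity

section Decode

variable (lam : ℕ → ℕ) {m n : ℕ}

lemma decode_exists (h0 : lam m = 0) (x : Fin m → ℤ)
    (hlow : ∀ i : Fin m, (lam i : ℤ) ≤ x i) (hup : ∀ i : Fin m, x i ≤ (n:ℤ))
    (hxa : ∀ i j : Fin m, i ≤ j → x j ≤ x i) :
    ∃ (p : NEPath m n), Avoids lam p ∧ p.encode = x := by
  classical
  set X : ℕ → ℕ := fun i => if h : i < m then (x ⟨i, h⟩).toNat else 0 with hX
  have hXval : ∀ (i : ℕ) (h : i < m), (X i : ℤ) = x ⟨i, h⟩ := by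
    intro i h
    simp only [hX, dif_pos h]
    exact Int.toNat_of_nonneg (le_trans (Int.natCast_nonneg _) (hlow ⟨i, h⟩))
  have hXanti : ∀ i j, i ≤ j → j < m → X j ≤ X i := by
    intro i j hij hj
    have him : i < m := by omega
    have := hxa ⟨i, him⟩ ⟨j, hj⟩ hij
    have e1 := hXval i him
    have e2 := hXval j hj
    omega
  have hXup : ∀ i, i < m → X i ≤ n := by
    intro i hi
    have := hup ⟨i, hi⟩
    have := hXval i hi
    omega
  have hXlow : ∀ i, i < m → lam i ≤ X i := by
    intro i hi
    have h1 : (lam i : ℤ) ≤ x ⟨i, hi⟩ := by simpa using hlow ⟨i, hi⟩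
    have := hXval i hi
    omega
  set t : ℕ → ℕ := fun i => m - i + X i with ht
  have t_strict : ∀ i j, i < j → j < m → t j < t i := by
    intro i j hij hj
    have := hXanti i j (le_of_lt hij) hj
    simp only [ht]
    omega
  have t_weak : ∀ i j, i ≤ j → j < m → t j ≤ t i := by
    intro i j hij hj
    have := hXanti i j hij hj
    simp only [ht]
    omega
  have t_pos : ∀ i, i < m → 1 ≤ t i := by
    intro i hi; simp only [ht]; omega
  have t_le : ∀ i, i < m → t i ≤ m + n := by
    intro i hi
    have := hXup i hi
    simp only [ht]
    omega
  set A : ℕ → ℕ := fun k => ((Finset.range m).filter (fun i => t i ≤ k)).card with hA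
  have A_le : ∀ k, A k ≤ m := by
    intro k
    calc ((Finset.range m).filter (fun i => t i ≤ k)).card
        ≤ (Finset.range m).card := Finset.card_filter_le _ _
      _ = m := Finset.card_range m
  have A_mono : ∀ k k', k ≤ k' → A k ≤ A k' := by
    intro k k' hk
    apply Finset.card_le_card
    intro i hi
    simp only [Finset.mem_filter] at *
    exact ⟨hi.1, le_trans hi.2 hk⟩
  have A_zero : A 0 = 0 := by
    simp only [hA, Finset.card_eq_zero]
    rw [Finset.filter_eq_empty_iff]
    intro i hi
    rw [Finset.mem_range] at hi
    have := t_pos i hi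
    omega
  have A_mn : A (m+n) = m := by
    simp only [hA]
    rw [Finset.filter_true_of_mem, Finset.card_range]
    intro i hi
    rw [Finset.mem_range] at hi
    exact t_le i hi
  have t_inj : ∀ a b, a < m → b < m → t a = t b → a = b := by
    intro a b ha hb hab
    rcases lt_trichotomy a b with h | h | h
    · have := t_strict a b h hb; omega
    · exact h
    · have := t_strict b a h ha; omega
  have A_succ_le : ∀ k, A (k+1) ≤ A k + 1 := by
    intro k
    have hsub : (Finset.range m).filter (fun i => t i ≤ k + 1) ⊆
        ((Finset.range m).filter (fun i => t i ≤ k)) ∪ ((Finset.range m).filter (fun i => t i = k+1)) := by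
      intro i hi
      simp only [Finset.mem_filter, Finset.mem_union, Finset.mem_range] at *
      omega
    have hone : ((Finset.range m).filter (fun i => t i = k+1)).card ≤ 1 := by
      apply Finset.card_le_one.mpr
      intro a ha b hb
      simp only [Finset.mem_filter, Finset.mem_range] at ha hb
      exact t_inj a b ha.1 hb.1 (by omega)
    calc A (k+1) ≤ (((Finset.range m).filter (fun i => t i ≤ k)) ∪
          ((Finset.range m).filter (fun i => t i = k+1))).card := Finset.card_le_card hsub
      _ ≤ A k + ((Finset.range m).filter (fun i => t i = k+1)).card := Finset.card_union_le _ _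
      _ ≤ A k + 1 := by omega
  have A_le_k : ∀ k, A k ≤ k := by
    intro k
    have : A k = (((Finset.range m).filter (fun i => t i ≤ k)).image (fun i => t i - 1)).card := by
      rw [Finset.card_image_of_injOn]
      intro a ha b hb hab
      simp only [Finset.coe_filter, Set.mem_setOf_eq, Finset.mem_range] at ha hb
      have h1 := t_pos a ha.1
      have h2 := t_pos b hb.1
      have hab' : t a - 1 = t b - 1 := hab
      exact t_inj a b ha.1 hb.1 (by omega)
    rw [this]
    have : (((Finset.range m).filter (fun i => t i ≤ k)).image (fun i => t i - 1)) ⊆ Finset.range k := by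
      intro v hv
      simp only [Finset.mem_image, Finset.mem_filter, Finset.mem_range] at hv ⊢
      obtain ⟨i, ⟨him, hik⟩, rfl⟩ := hv
      have := t_pos i him
      omega
    calc _ ≤ (Finset.range k).card := Finset.card_le_card this
      _ = k := Finset.card_range k
  have A_band : ∀ i k, i < m → k < t i → A k ≤ m - i - 1 := by
    intro i k hi hk
    have hsub : (Finset.range m).filter (fun i' => t i' ≤ k) ⊆ Finset.Ico (i+1) m := by
      intro i' hi'
      simp only [Finset.mem_filter, Finset.mem_range, Finset.mem_Ico] at hi' ⊢
      refine ⟨?_, hi'.1⟩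
      by_contra hc
      have : t i ≤ t i' := t_weak i' i (by omega) hi
      omega
    calc A k ≤ (Finset.Ico (i+1) m).card := Finset.card_le_card hsub
      _ = m - (i+1) := Nat.card_Ico _ _
      _ ≤ m - i - 1 := by omega
  have A_at : ∀ i, i < m → A (t i) = m - i := by
    intro i hi
    have : (Finset.range m).filter (fun i' => t i' ≤ t i) = Finset.Ico i m := by
      ext i'
      simp only [Finset.mem_filter, Finset.mem_range, Finset.mem_Ico]
      constructor
      · rintro ⟨h1, h2⟩
        refine ⟨?_, h1⟩
        by_contra hc
        have := t_strict i' i (by omega) hi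
        omega
      · rintro ⟨h1, h2⟩
        exact ⟨h2, t_weak i i' h1 h2⟩
    show ((Finset.range m).filter (fun i' => t i' ≤ t i)).card = m - i
    rw [this, Nat.card_Ico]
  -- the path
  set P : ℕ → ℕ × ℕ := fun k => (m - A (min k (m+n)), min k (m+n) - A (min k (m+n))) with hP
  have hstart : P 0 = (m, 0) := by
    simp only [hP, Nat.min_eq_left (Nat.zero_le _), A_zero]
    simp
  have hstep : ∀ k < m + n,
      ((P (k+1)).1 + 1 = (P k).1 ∧ (P (k+1)).2 = (P k).2) ∨
      ((P (k+1)).1 = (P k).1 ∧ (P (k+1)).2 = (P k).2 + 1) := by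
    intro k hk
    have e1 : min k (m+n) = k := by omega
    have e2 : min (k+1) (m+n) = k+1 := by omega
    have h1 := A_mono k (k+1) (by omega)
    have h2 := A_succ_le k
    have h3 := A_le (k+1)
    have h4 := A_le_k k
    simp only [hP, e1, e2]
    rcases Nat.eq_or_lt_of_le h1 with hc | hc
    · right; omega
    · left; omega
  have htail : ∀ k, m + n ≤ k → P k = (0, n) := by
    intro k hk
    have e1 : min k (m+n) = m + n := by omega
    simp only [hP, e1, A_mn]
    have h2 : m + n - m = n := by omega
    simp [h2]
  set p : NEPath m n := ⟨P, hstart, hstep, htail⟩ with hp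
  -- avoidance
  have havoid : Avoids lam p := by
    intro k
    show lam (P k).1 ≤ (P k).2
    set k' := min k (m+n) with hk'
    have hk'le : k' ≤ m + n := by omega
    rcases Nat.eq_zero_or_pos (A k') with ha | ha
    · simp only [hP, ← hk', ha, Nat.sub_zero, h0]
      exact Nat.zero_le _
    · have haM := A_le k'
      set i := m - A k' with hi
      have him : i < m := by omega
      have hti : t i ≤ k' := by
        by_contra hc
        have := A_band i k' him (by omega)
        omega
      have hXi := hXlow i him
      simp only [hP, ← hk', ← hi]
      have : m - i + X i ≤ k' := by have := hti; simp only [ht] at this; omega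
      omega
  -- encode round trip
  have hpts_at_t : ∀ (i : ℕ) (hi : i < m), p.pts (t i) = (i, X i) := by
    intro i hi
    have h1 : min (t i) (m+n) = t i := by have := t_le i hi; omega
    have h2 := A_at i hi
    show P (t i) = (i, X i)
    simp only [hP, h1, h2]
    have : m - i + X i = t i := rfl
    have hXi : X i = t i - (m - i) := by omega
    ext <;> simp <;> omega
  have hT_eq : ∀ (i : ℕ) (hi : i < m), p.T i = t i := by
    intro i hi
    rw [NEPath.T, Nat.find_eq_iff]
    constructor
    · rw [hpts_at_t i hi]
    · intro k hk
      have hkmn : k < m + n := by have := t_le i hi; omega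
      have e1 : min k (m+n) = k := by omega
      have hAb := A_band i k hi hk
      show ¬ (P k).1 ≤ i
      simp only [hP, e1]
      omega
  have hencode : p.encode = x := by
    funext i
    have hi := i.isLt
    show ((p.pts (p.T ↑i)).2 : ℤ) = x i
    rw [hT_eq ↑i hi, hpts_at_t ↑i hi]
    simpa using hXval ↑i hi
  exact ⟨p, havoid, hencode⟩

end Decode


section Count

lemma pathCount_eq (lam : ℕ → ℕ) (m n : ℕ) (h0 : lam m = 0) :
    pathCount lam m n = (Xset lam m ((n:ℤ))).card := by
  classical
  have e : {p : NEPath m n // Avoids lam p} ≃ {x // x ∈ Xset lam m ((n:ℤ))} := by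
    refine Equiv.ofBijective (fun pp => ⟨pp.1.encode, ?_⟩) ⟨?_, ?_⟩
    · rw [mem_Xset]
      obtain ⟨p, hp⟩ := pp
      refine ⟨fun i => ⟨?_, ?_⟩, fun i j hij => ?_⟩
      · show (lam ↑i : ℤ) ≤ ((p.pts (p.T ↑i)).2 : ℤ)
        have h1 := hp (p.T ↑i)
        rw [p.row_T (le_of_lt i.isLt)] at h1
        exact_mod_cast h1
      · show ((p.pts (p.T ↑i)).2 : ℤ) ≤ ((n:ℕ) : ℤ)
        have h1 : (p.pts (p.T ↑i)).2 ≤ (p.pts (m+n)).2 := p.col_mono (p.T_le ↑i)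
        rw [p.tail _ le_rfl] at h1
        exact_mod_cast h1
      · show ((p.pts (p.T ↑j)).2 : ℤ) ≤ ((p.pts (p.T ↑i)).2 : ℤ)
        have hT : p.T ↑j ≤ p.T ↑i := p.T_min (by rw [p.row_T (le_of_lt i.isLt)]; exact hij)
        exact_mod_cast p.col_mono hT
    · intro p q hpq
      exact Subtype.ext (encode_injective _ _ (by simpa using congrArg Subtype.val hpq))
    · rintro ⟨x, hx⟩
      rw [mem_Xset] at hx
      obtain ⟨p, hav, henc⟩ :=
        decode_exists lam h0 x (fun i => (hx.1 i).1) (fun i => (hx.1 i).2) hx.2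
      exact ⟨⟨p, hav⟩, Subtype.ext henc⟩
  rw [pathCount, Nat.card_congr e, Nat.card_eq_finsetCard]

lemma pathCount_eq_zero (lam : ℕ → ℕ) (m n : ℕ) (h0 : lam m ≠ 0) :
    pathCount lam m n = 0 := by
  have hie : IsEmpty {p : NEPath m n // Avoids lam p} := by
    refine ⟨fun pp => ?_⟩
    obtain ⟨p, hp⟩ := pp
    have h1 := hp 0
    rw [p.start] at h1
    simp only at h1
    omega
  rw [pathCount, Nat.card_of_isEmpty]

end Count

/-- The strong Simion conjecture: the antidiagonal path-count sequence is log concave. -/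
theorem strong_simion (lam : ℕ → ℕ) (hlam : IsFerrers lam)
    (m n : ℕ) (hm : 1 ≤ m) (hn : 1 ≤ n) :
    pathCount lam (m - 1) (n + 1) * pathCount lam (m + 1) (n - 1) ≤
      pathCount lam m n ^ 2 := by
  obtain ⟨hanti, -⟩ := hlam
  by_cases hz : lam (m-1) = 0
  · have hm0 : lam m = 0 := Nat.eq_zero_of_le_zero (hz ▸ hanti (Nat.sub_le m 1))
    have hm1 : lam (m+1) = 0 := Nat.eq_zero_of_le_zero (hm0 ▸ hanti (Nat.le_succ m))
    obtain ⟨M, rfl⟩ : ∃ M, m = M + 1 := ⟨m-1, by omega⟩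
    have e1 : M + 1 - 1 = M := by omega
    rw [e1]
    have hzM : lam M = 0 := by rwa [e1] at hz
    have hc1 : (((n+1 : ℕ)) : ℤ) = (n:ℤ) + 1 := by push_cast; ring
    have hc2 : (((n-1 : ℕ)) : ℤ) = (n:ℤ) - 1 := by omega
    rw [pathCount_eq lam M (n+1) hzM,
        pathCount_eq lam (M+1+1) (n-1) hm1,
        pathCount_eq lam (M+1) n hm0, hc1, hc2]
    calc (Xset lam M ((n:ℤ)+1)).card * (Xset lam (M+1+1) ((n:ℤ)-1)).card
        ≤ (Xset lam (M+1) ((n:ℤ)+1)).card * (Xset lam (M+1) ((n:ℤ)-1)).card :=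
          Xstep1 lam hanti M hzM (n:ℤ)
      _ ≤ (Xset lam (M+1) ((n:ℤ))).card ^ 2 := Xstep2 lam (M+1) (n:ℤ)
  · rw [pathCount_eq_zero lam (m-1) (n+1) hz]
    simp
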